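/- With the notation of the CEV scale data, the function ψ is twice differentiable on (0,1), satisfies the degenerate ODE μ x ψ'(x) + (1/2) σ² x^{2p} ψ''(x) = −1 for every x ∈ (0,1), and satisfies the boundary conditions ψ(1) = 0 and lim_{x↓0} ψ(x) = 0. -/

import Mathlib

open MeasureTheory Set intervalIntegral

/-- The scale density `s(x) = exp(−(2μ/(σ²(2−2p))) x^{2−2p})` of the CEV diffusion. -/
noncomputable def sDen (μ σ p : ℝ) (x : ℝ) : ℝ :=
  Real.exp (-(2 * μ / (σ ^ 2 * (2 - 2 * p))) * x ^ (2 - 2 * p))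

/-- The scale function `S(x) = ∫₀ˣ s(z) dz` of the CEV diffusion. -/
noncomputable def Sfun (μ σ p : ℝ) (x : ℝ) : ℝ := ∫ z in (0 : ℝ)..x, sDen μ σ p z

/-- The speed density `m(y) = 1/(σ² y^{2p} s(y))` of the CEV diffusion. -/
noncomputable def mDen (μ σ p : ℝ) (y : ℝ) : ℝ := 1 / (σ ^ 2 * y ^ (2 * p) * sDen μ σ p y)

/-- `φ(x) = S(x)/S(1)`, the probability that the CEV diffusion started at `x` reaches
`1` before `0`. -/
noncomputable def phiFun (μ σ p : ℝ) (x : ℝ) : ℝ := Sfun μ σ p x / Sfun μ σ p 1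

/-- `ψ(x) = 2 φ(x) ∫ₓ¹ (S(1) − S(y)) m(y) dy + 2 (1 − φ(x)) ∫₀ˣ S(y) m(y) dy`, the expectation
of the exit time of the CEV diffusion from `(0,1)` started at `x`. -/
noncomputable def psiFun (μ σ p : ℝ) (x : ℝ) : ℝ :=
  2 * phiFun μ σ p x * (∫ y in x..(1 : ℝ), (Sfun μ σ p 1 - Sfun μ σ p y) * mDen μ σ p y)
    + 2 * (1 - phiFun μ σ p x) * (∫ y in (0 : ℝ)..x, Sfun μ σ p y * mDen μ σ p y)

namespace CEV

variable {μ σ p : ℝ}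

/-- upper bound constant for `sDen` on `[0,1]` -/
noncomputable def c2 (μ σ p : ℝ) : ℝ := Real.exp |2 * μ / (σ ^ 2 * (2 - 2 * p))|

lemma sDen_pos (x : ℝ) : 0 < sDen μ σ p x := Real.exp_pos _

lemma continuous_sDen (hp1 : p < 1) : Continuous (sDen μ σ p) :=
  Real.continuous_exp.comp (continuous_const.mul (Real.continuous_rpow_const (by linarith)))

lemma sDen_le_c2 (hp1 : p < 1) {x : ℝ} (hx : x ∈ Icc (0:ℝ) 1) : sDen μ σ p x ≤ c2 μ σ p := by
  set K := 2 * μ / (σ ^ 2 * (2 - 2 * p)) with hK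
  have h1 : 0 ≤ x ^ (2 - 2*p) := Real.rpow_nonneg hx.1 _
  have h2 : x ^ (2 - 2*p) ≤ 1 := Real.rpow_le_one hx.1 hx.2 (by linarith)
  refine Real.exp_le_exp.mpr ?_
  calc -K * x ^ (2-2*p) ≤ |(-K) * x ^ (2-2*p)| := le_abs_self _
    _ = |K| * x ^ (2-2*p) := by rw [abs_mul, abs_neg, abs_of_nonneg h1]
    _ ≤ |K| * 1 := mul_le_mul_of_nonneg_left h2 (abs_nonneg _)
    _ = |K| := mul_one _

lemma c2_inv_le_sDen (hp1 : p < 1) {x : ℝ} (hx : x ∈ Icc (0:ℝ) 1) :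
    (c2 μ σ p)⁻¹ ≤ sDen μ σ p x := by
  set K := 2 * μ / (σ ^ 2 * (2 - 2 * p)) with hK
  have h1 : 0 ≤ x ^ (2 - 2*p) := Real.rpow_nonneg hx.1 _
  have h2 : x ^ (2 - 2*p) ≤ 1 := Real.rpow_le_one hx.1 hx.2 (by linarith)
  rw [c2, ← Real.exp_neg]
  refine Real.exp_le_exp.mpr ?_
  calc -|K| ≤ -|(-K) * x ^ (2-2*p)| := by
        rw [abs_mul, abs_neg, abs_of_nonneg h1]
        nlinarith [abs_nonneg K]
    _ ≤ -K * x ^ (2-2*p) := neg_abs_le _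

lemma hasDerivAt_Sfun (hp1 : p < 1) (x : ℝ) : HasDerivAt (Sfun μ σ p) (sDen μ σ p x) x :=
  intervalIntegral.integral_hasDerivAt_right
    ((continuous_sDen hp1).intervalIntegrable _ _)
    (continuous_sDen hp1).stronglyMeasurable.stronglyMeasurableAtFilter
    (continuous_sDen hp1).continuousAt

lemma continuous_Sfun (hp1 : p < 1) : Continuous (Sfun μ σ p) :=
  continuous_iff_continuousAt.mpr fun x => (hasDerivAt_Sfun hp1 x).continuousAt

lemma Sfun_zero : Sfun μ σ p 0 = 0 := intervalIntegral.integral_same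

lemma Sfun_mono (hp1 : p < 1) {a b : ℝ} (hab : a ≤ b) : Sfun μ σ p a ≤ Sfun μ σ p b := by
  have h : Sfun μ σ p b - Sfun μ σ p a = ∫ z in a..b, sDen μ σ p z := by
    rw [Sfun, Sfun, intervalIntegral.integral_interval_sub_left
      ((continuous_sDen hp1).intervalIntegrable _ _) ((continuous_sDen hp1).intervalIntegrable _ _)]
  have h2 : (0:ℝ) ≤ ∫ z in a..b, sDen μ σ p z :=
    intervalIntegral.integral_nonneg hab (fun u _ => (sDen_pos (μ:=μ) (σ:=σ) (p:=p) u).le)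
  linarith

lemma Sfun_nonneg (hp1 : p < 1) {x : ℝ} (hx : 0 ≤ x) : 0 ≤ Sfun μ σ p x := by
  simpa [Sfun_zero] using Sfun_mono (μ:=μ) (σ:=σ) hp1 hx

lemma Sfun_pos (hp1 : p < 1) {x : ℝ} (hx : 0 < x) : 0 < Sfun μ σ p x :=
  intervalIntegral.intervalIntegral_pos_of_pos
    ((continuous_sDen hp1).intervalIntegrable _ _) (fun u => sDen_pos u) hx

lemma Sfun_le (hp1 : p < 1) {x : ℝ} (hx : x ∈ Icc (0:ℝ) 1) :
    Sfun μ σ p x ≤ c2 μ σ p * x := by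
  have h := intervalIntegral.integral_mono_on (μ := volume) hx.1
    ((continuous_sDen hp1).intervalIntegrable 0 x)
    (_root_.intervalIntegrable_const (c := c2 μ σ p))
    (fun y hy => sDen_le_c2 hp1 ⟨hy.1, hy.2.trans hx.2⟩)
  simpa [Sfun, mul_comm, smul_eq_mul] using h
lemma mDen_nonneg (hx : 0 ≤ σ) {y : ℝ} (hy : 0 ≤ y) : 0 ≤ mDen μ σ p y := by
  rw [mDen]
  have h1 := Real.rpow_nonneg hy (2*p)
  have h2 := (sDen_pos (μ:=μ) (σ:=σ) (p:=p) y).le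
  positivity

lemma mDen_pos (hσ : 0 < σ) {y : ℝ} (hy : 0 < y) : 0 < mDen μ σ p y := by
  rw [mDen]
  have := Real.rpow_pos_of_pos hy (2*p)
  have := sDen_pos (μ:=μ) (σ:=σ) (p:=p) y
  positivity

lemma continuousOn_mDen (hσ : 0 < σ) (hp1 : p < 1) : ContinuousOn (mDen μ σ p) (Ioi 0) := by
  intro y hy
  have hy' : (0:ℝ) < y := hy
  have hden : ContinuousAt (fun y : ℝ => σ ^ 2 * y ^ (2*p) * sDen μ σ p y) y :=
    (continuousAt_const.mul (Real.continuousAt_rpow_const y (2*p) (Or.inl hy'.ne'))).mul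
      (continuous_sDen hp1).continuousAt
  have hne : σ ^ 2 * y ^ (2*p) * sDen μ σ p y ≠ 0 := by
    have := Real.rpow_pos_of_pos hy' (2*p)
    have := sDen_pos (μ:=μ) (σ:=σ) (p:=p) y
    positivity
  exact ((continuousAt_const.div hden hne).continuousWithinAt)

lemma sDen_mul_mDen (hσ : 0 < σ) {y : ℝ} (hy : 0 < y) :
    sDen μ σ p y * mDen μ σ p y = 1 / (σ ^ 2 * y ^ (2*p)) := by
  have h1 : y ^ (2*p) ≠ 0 := (Real.rpow_pos_of_pos hy _).ne'
  have h2 : sDen μ σ p y ≠ 0 := (sDen_pos y).ne'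
  rw [mDen]
  field_simp

lemma mDen_le (hσ : 0 < σ) (hp1 : p < 1) {y : ℝ} (hy : y ∈ Ioc (0:ℝ) 1) :
    mDen μ σ p y ≤ c2 μ σ p / σ ^ 2 * y ^ (-(2*p)) := by
  have hyp : (0:ℝ) < y ^ (2*p) := Real.rpow_pos_of_pos hy.1 _
  have hs : (c2 μ σ p)⁻¹ ≤ sDen μ σ p y := c2_inv_le_sDen hp1 ⟨hy.1.le, hy.2⟩
  have hc2 : (0:ℝ) < c2 μ σ p := Real.exp_pos _
  rw [mDen, Real.rpow_neg hy.1.le]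
  have hsne : (0:ℝ) < sDen μ σ p y := sDen_pos y
  calc 1 / (σ^2 * y^(2*p) * sDen μ σ p y) ≤ 1 / (σ^2 * y^(2*p) * (c2 μ σ p)⁻¹) := by
        apply one_div_le_one_div_of_le (by positivity)
        gcongr
    _ = c2 μ σ p / σ^2 * (y^(2*p))⁻¹ := by
        field_simp

lemma c2_pos : 0 < c2 μ σ p := Real.exp_pos _

lemma intervalIntegrable_Sm (hσ : 0 < σ) (hp1 : p < 1) {x : ℝ}
    (hx0 : 0 ≤ x) (hx1 : x ≤ 1) :
    IntervalIntegrable (fun y => Sfun μ σ p y * mDen μ σ p y) volume 0 x := by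
  have hq : (-1:ℝ) < 1 - 2*p := by linarith
  have hg : IntervalIntegrable
      (fun y : ℝ => c2 μ σ p * (c2 μ σ p / σ^2) * y ^ (1-2*p)) volume 0 x :=
    (intervalIntegral.intervalIntegrable_rpow' hq).const_mul _
  rw [intervalIntegrable_iff, uIoc_of_le hx0] at hg ⊢
  apply MeasureTheory.Integrable.mono' hg
  · exact (((continuous_Sfun hp1).continuousOn).mul
      ((continuousOn_mDen hσ hp1).mono (fun y hy => hy.1))).aestronglyMeasurable
      measurableSet_Ioc
  · rw [ae_restrict_iff' measurableSet_Ioc]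
    refine Filter.Eventually.of_forall (fun y hy => ?_)
    have hy1 : y ≤ 1 := hy.2.trans hx1
    have hS : 0 ≤ Sfun μ σ p y := Sfun_nonneg hp1 hy.1.le
    have hm : 0 ≤ mDen μ σ p y := mDen_nonneg hσ.le hy.1.le
    have hc2 : (0:ℝ) < c2 μ σ p := c2_pos
    rw [Real.norm_of_nonneg (mul_nonneg hS hm)]
    have key : y * y ^ (-(2*p)) = y ^ (1-2*p) := by
      rw [show (1-2*p : ℝ) = 1 + (-(2*p)) by ring, Real.rpow_add hy.1, Real.rpow_one]
    calc Sfun μ σ p y * mDen μ σ p y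
        ≤ (c2 μ σ p * y) * (c2 μ σ p / σ^2 * y ^ (-(2*p))) := by
          exact mul_le_mul (Sfun_le hp1 ⟨hy.1.le, hy1⟩) (mDen_le hσ hp1 ⟨hy.1, hy1⟩) hm
            (mul_nonneg hc2.le hy.1.le)
      _ = c2 μ σ p * (c2 μ σ p / σ^2) * (y * y ^ (-(2*p))) := by ring
      _ = c2 μ σ p * (c2 μ σ p / σ^2) * y ^ (1-2*p) := by rw [key]

noncomputable def Gfun (μ σ p : ℝ) (x : ℝ) : ℝ :=
  ∫ y in x..(1:ℝ), (Sfun μ σ p 1 - Sfun μ σ p y) * mDen μ σ p y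

noncomputable def Hfun (μ σ p : ℝ) (x : ℝ) : ℝ :=
  ∫ y in (0:ℝ)..x, Sfun μ σ p y * mDen μ σ p y

noncomputable def Dfun (μ σ p : ℝ) (x : ℝ) : ℝ :=
  2 * sDen μ σ p x / Sfun μ σ p 1 * (Gfun μ σ p x - Hfun μ σ p x)

lemma continuousOn_Gintegrand (hσ : 0 < σ) (hp1 : p < 1) :
    ContinuousOn (fun y => (Sfun μ σ p 1 - Sfun μ σ p y) * mDen μ σ p y) (Ioi 0) :=
  (continuousOn_const.sub (continuous_Sfun hp1).continuousOn).mul (continuousOn_mDen hσ hp1)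

lemma intervalIntegrable_G (hσ : 0 < σ) (hp1 : p < 1) {a b : ℝ} (ha : 0 < a) (hb : 0 < b) :
    IntervalIntegrable (fun y => (Sfun μ σ p 1 - Sfun μ σ p y) * mDen μ σ p y) volume a b :=
  ((continuousOn_Gintegrand hσ hp1).mono
    (fun y hy => (lt_min ha hb).trans_le hy.1)).intervalIntegrable

lemma hasDerivAt_G (hσ : 0 < σ) (hp1 : p < 1) {x : ℝ} (hx : 0 < x) :
    HasDerivAt (Gfun μ σ p) (-((Sfun μ σ p 1 - Sfun μ σ p x) * mDen μ σ p x)) x :=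
  intervalIntegral.integral_hasDerivAt_left (intervalIntegrable_G hσ hp1 hx one_pos)
    ⟨Ioi 0, Ioi_mem_nhds hx,
      (continuousOn_Gintegrand hσ hp1).aestronglyMeasurable measurableSet_Ioi⟩
    ((continuousOn_Gintegrand hσ hp1).continuousAt (Ioi_mem_nhds hx))

lemma hasDerivAt_H (hσ : 0 < σ) (hp1 : p < 1) {x : ℝ} (hx : 0 < x) (hx1 : x ≤ 1) :
    HasDerivAt (Hfun μ σ p) (Sfun μ σ p x * mDen μ σ p x) x :=
  intervalIntegral.integral_hasDerivAt_right (intervalIntegrable_Sm hσ hp1 hx.le hx1)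
    ⟨Ioi 0, Ioi_mem_nhds hx,
      (((continuous_Sfun hp1).continuousOn).mul
        (continuousOn_mDen hσ hp1)).aestronglyMeasurable measurableSet_Ioi⟩
    ((((continuous_Sfun hp1).continuousOn).mul
        (continuousOn_mDen hσ hp1)).continuousAt (Ioi_mem_nhds hx))

lemma hasDerivAt_sDen (hσ : 0 < σ) (hp1 : p < 1) {x : ℝ} (hx : 0 < x) :
    HasDerivAt (sDen μ σ p) (-(2*μ/σ^2) * x ^ (1-2*p) * sDen μ σ p x) x := by
  have h1 : HasDerivAt (fun x : ℝ => x ^ (2-2*p)) ((2-2*p) * x ^ (2-2*p-1)) x :=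
    Real.hasDerivAt_rpow_const (Or.inl hx.ne')
  have h2 := (h1.const_mul (-(2 * μ / (σ ^ 2 * (2 - 2 * p))))).exp
  convert h2 using 1
  · rfl
  have he : (2-2*p-1 : ℝ) = 1-2*p := by ring
  rw [he]
  simp only [sDen]
  have hσ' : σ ≠ 0 := hσ.ne'
  have hq : (2-2*p : ℝ) ≠ 0 := by linarith
  field_simp
  have hq1 : (1 - p : ℝ) ≠ 0 := by linarith
  rw [mul_div_cancel_right₀ _ hq1]

lemma hasDerivAt_phi (hp1 : p < 1) (x : ℝ) :
    HasDerivAt (phiFun μ σ p) (sDen μ σ p x / Sfun μ σ p 1) x :=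
  (hasDerivAt_Sfun hp1 x).div_const _

lemma psiFun_eq : psiFun μ σ p = fun x =>
    2 * phiFun μ σ p x * Gfun μ σ p x + 2 * (1 - phiFun μ σ p x) * Hfun μ σ p x := rfl

lemma hasDerivAt_psi (hσ : 0 < σ) (hp1 : p < 1) {x : ℝ} (hx : x ∈ Ioo (0:ℝ) 1) :
    HasDerivAt (psiFun μ σ p) (Dfun μ σ p x) x := by
  have hS1 : 0 < Sfun μ σ p 1 := Sfun_pos hp1 one_pos
  have hphi := hasDerivAt_phi (μ:=μ) (σ:=σ) hp1 x
  have hG := hasDerivAt_G (μ:=μ) hσ hp1 hx.1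
  have hH := hasDerivAt_H (μ:=μ) hσ hp1 hx.1 hx.2.le
  have h2 := (hphi.const_mul 2).mul hG
  have h4 := (((hasDerivAt_const x (1:ℝ)).sub hphi).const_mul 2).mul hH
  have h5 := h2.add h4
  rw [psiFun_eq]
  convert h5 using 1
  · rfl
  · rfl
  · rfl
  simp only [Pi.sub_apply]
  rw [Dfun, phiFun]
  field_simp
  ring

lemma hasDerivAt_D (hσ : 0 < σ) (hp1 : p < 1) {x : ℝ} (hx : x ∈ Ioo (0:ℝ) 1) :
    HasDerivAt (Dfun μ σ p)
      (-(2*μ/σ^2) * x ^ (1-2*p) * Dfun μ σ p x - 2 * (sDen μ σ p x * mDen μ σ p x)) x := by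
  have hS1 : 0 < Sfun μ σ p 1 := Sfun_pos hp1 one_pos
  have hs := hasDerivAt_sDen (μ:=μ) hσ hp1 hx.1
  have hG := hasDerivAt_G (μ:=μ) hσ hp1 hx.1
  have hH := hasDerivAt_H (μ:=μ) hσ hp1 hx.1 hx.2.le
  have h1 := ((hs.const_mul 2).div_const (Sfun μ σ p 1)).mul (hG.sub hH)
  convert h1 using 1
  · rfl
  · rfl
  · rfl
  simp only [Pi.sub_apply]
  rw [Dfun]
  field_simp
  ring

lemma psi_one (hp1 : p < 1) : psiFun μ σ p 1 = 0 := by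
  have hS1 : Sfun μ σ p 1 ≠ 0 := (Sfun_pos hp1 one_pos).ne'
  rw [psiFun_eq]
  simp [Gfun, phiFun, div_self hS1]

open Filter Topology

lemma tendsto_phi (hp1 : p < 1) :
    Tendsto (phiFun μ σ p) (𝓝[>] (0:ℝ)) (𝓝 0) := by
  have h : Tendsto (phiFun μ σ p) (𝓝 (0:ℝ)) (𝓝 (phiFun μ σ p 0)) :=
    ((continuous_Sfun hp1).div_const _).continuousAt
  have h0 : phiFun μ σ p 0 = 0 := by simp [phiFun, Sfun_zero]
  rw [h0] at h
  exact h.mono_left nhdsWithin_le_nhds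

lemma Hfun_nonneg (hσ : 0 < σ) (hp1 : p < 1) {x : ℝ} (hx0 : 0 ≤ x) : 0 ≤ Hfun μ σ p x :=
  intervalIntegral.integral_nonneg hx0
    (fun y hy => mul_nonneg (Sfun_nonneg hp1 hy.1) (mDen_nonneg hσ.le hy.1))

lemma Hfun_le (hσ : 0 < σ) (hp1 : p < 1) {x : ℝ} (hx : x ∈ Icc (0:ℝ) 1) :
    Hfun μ σ p x ≤ c2 μ σ p * (c2 μ σ p / σ^2) * (x ^ (2-2*p) / (2-2*p)) := by
  have hq : (-1:ℝ) < 1 - 2*p := by linarith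
  have hq' : (0:ℝ) < 2 - 2*p := by linarith
  have hc2 : (0:ℝ) < c2 μ σ p := c2_pos
  have h := intervalIntegral.integral_mono_on (μ := volume) hx.1
    (intervalIntegrable_Sm (μ:=μ) hσ hp1 hx.1 hx.2)
    ((intervalIntegral.intervalIntegrable_rpow' hq).const_mul (c2 μ σ p * (c2 μ σ p / σ^2)))
    (fun y hy => ?_)
  · calc Hfun μ σ p x ≤ ∫ y in (0:ℝ)..x, c2 μ σ p * (c2 μ σ p / σ^2) * y ^ (1-2*p) := h
      _ = c2 μ σ p * (c2 μ σ p / σ^2) * ((x ^ ((1-2*p)+1) - (0:ℝ) ^ ((1-2*p)+1)) / ((1-2*p)+1)) := by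
          rw [intervalIntegral.integral_const_mul, integral_rpow (Or.inl hq)]
      _ = c2 μ σ p * (c2 μ σ p / σ^2) * (x ^ (2-2*p) / (2-2*p)) := by
          rw [show ((1-2*p)+1 : ℝ) = 2-2*p by ring, Real.zero_rpow hq'.ne']
          ring
  · rcases eq_or_lt_of_le hy.1 with h0 | h0
    · rw [← h0, Sfun_zero, zero_mul]
      have := Real.rpow_nonneg (le_refl (0:ℝ)) (1-2*p)
      positivity
    · have hy1 : y ≤ 1 := hy.2.trans hx.2
      have hm : 0 ≤ mDen μ σ p y := mDen_nonneg hσ.le h0.le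
      have key : y * y ^ (-(2*p)) = y ^ (1-2*p) := by
        rw [show (1-2*p : ℝ) = 1 + (-(2*p)) by ring, Real.rpow_add h0, Real.rpow_one]
      calc Sfun μ σ p y * mDen μ σ p y
          ≤ (c2 μ σ p * y) * (c2 μ σ p / σ^2 * y ^ (-(2*p))) :=
            mul_le_mul (Sfun_le hp1 ⟨h0.le, hy1⟩) (mDen_le hσ hp1 ⟨h0, hy1⟩) hm
              (mul_nonneg hc2.le h0.le)
        _ = c2 μ σ p * (c2 μ σ p / σ^2) * (y * y ^ (-(2*p))) := by ring
        _ = c2 μ σ p * (c2 μ σ p / σ^2) * y ^ (1-2*p) := by rw [key]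

lemma tendsto_H (hσ : 0 < σ) (hp1 : p < 1) :
    Tendsto (Hfun μ σ p) (𝓝[>] (0:ℝ)) (𝓝 0) := by
  have hq' : (0:ℝ) < 2 - 2*p := by linarith
  have hmem : Ioo (0:ℝ) 1 ∈ 𝓝[>] (0:ℝ) := Ioo_mem_nhdsGT one_pos
  refine squeeze_zero' (g := fun x => c2 μ σ p * (c2 μ σ p / σ^2) * (x ^ (2-2*p) / (2-2*p)))
    (Filter.eventually_of_mem hmem ?_) (Filter.eventually_of_mem hmem ?_) ?_
  · exact fun x hx => Hfun_nonneg hσ hp1 hx.1.le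
  · exact fun x hx => Hfun_le hσ hp1 ⟨hx.1.le, hx.2.le⟩
  · have h1 : Tendsto (fun x : ℝ => x ^ (2-2*p)) (𝓝 (0:ℝ)) (𝓝 ((0:ℝ) ^ (2-2*p))) :=
      (Real.continuousAt_rpow_const 0 _ (Or.inr hq'.le))
    rw [Real.zero_rpow hq'.ne'] at h1
    have := ((h1.mono_left (nhdsWithin_le_nhds (s := Ioi (0:ℝ)))).div_const (2-2*p)).const_mul
      (c2 μ σ p * (c2 μ σ p / σ^2))
    simpa using this

lemma Gfun_nonneg (hσ : 0 < σ) (hp1 : p < 1) {x : ℝ} (hx : x ∈ Ioo (0:ℝ) 1) :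
    0 ≤ Gfun μ σ p x :=
  intervalIntegral.integral_nonneg hx.2.le
    (fun y hy => mul_nonneg (sub_nonneg.2 (Sfun_mono hp1 hy.2))
      (mDen_nonneg hσ.le ((hx.1.trans_le hy.1).le)))

lemma Gfun_le (hσ : 0 < σ) (hp : 1/2 ≤ p) (hp1 : p < 1) {x : ℝ} (hx : x ∈ Ioo (0:ℝ) 1) :
    Gfun μ σ p x ≤ Sfun μ σ p 1 * (c2 μ σ p / σ^2) * x ^ (1-2*p) * (-Real.log x) := by
  have hS1 : 0 < Sfun μ σ p 1 := Sfun_pos hp1 one_pos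
  have hc2 : (0:ℝ) < c2 μ σ p := c2_pos
  have hRcont : IntervalIntegrable
      (fun y : ℝ => Sfun μ σ p 1 * (c2 μ σ p / σ^2) * x ^ (1-2*p) * (1/y)) volume x 1 := by
    apply ContinuousOn.intervalIntegrable
    apply continuousOn_const.mul
    apply continuousOn_const.div continuousOn_id
    intro y hy
    have : (0:ℝ) < y := lt_of_lt_of_le (lt_min hx.1 one_pos) hy.1
    exact this.ne'
  have h := intervalIntegral.integral_mono_on (μ := volume) hx.2.le
    (intervalIntegrable_G (μ:=μ) hσ hp1 hx.1 one_pos) hRcont (fun y hy => ?_)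
  · calc Gfun μ σ p x
        ≤ ∫ y in x..(1:ℝ), Sfun μ σ p 1 * (c2 μ σ p / σ^2) * x ^ (1-2*p) * (1/y) := h
      _ = Sfun μ σ p 1 * (c2 μ σ p / σ^2) * x ^ (1-2*p) * Real.log (1/x) := by
          rw [intervalIntegral.integral_const_mul, integral_one_div ?_]
          intro hmem
          rw [Set.uIcc_of_le hx.2.le] at hmem
          exact absurd hmem.1 (not_le.2 hx.1)
      _ = Sfun μ σ p 1 * (c2 μ σ p / σ^2) * x ^ (1-2*p) * (-Real.log x) := by
          rw [one_div, Real.log_inv]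
  · have hy0 : (0:ℝ) < y := hx.1.trans_le hy.1
    have hS : 0 ≤ Sfun μ σ p y := Sfun_nonneg hp1 hy0.le
    have hmle : mDen μ σ p y ≤ c2 μ σ p / σ^2 * (x ^ (1-2*p) * (1/y)) := by
      have key : x ^ (1-2*p) * (1/y) = x ^ (1-2*p) * y ^ (-(1:ℝ)) := by
        rw [Real.rpow_neg_one, one_div]
      have key2 : y ^ (-(2*p)) = y ^ (1-2*p) * y ^ (-(1:ℝ)) := by
        rw [← Real.rpow_add hy0]
        congr 1
        ring
      calc mDen μ σ p y ≤ c2 μ σ p / σ^2 * y ^ (-(2*p)) := mDen_le hσ hp1 ⟨hy0, hy.2⟩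
        _ = c2 μ σ p / σ^2 * (y ^ (1-2*p) * y ^ (-(1:ℝ))) := by rw [key2]
        _ ≤ c2 μ σ p / σ^2 * (x ^ (1-2*p) * y ^ (-(1:ℝ))) := by
            have h1 : y ^ (1-2*p) ≤ x ^ (1-2*p) :=
              Real.rpow_le_rpow_of_nonpos hx.1 hy.1 (by linarith)
            have h2 : (0:ℝ) ≤ y ^ (-(1:ℝ)) := Real.rpow_nonneg hy0.le _
            have h3 : (0:ℝ) ≤ c2 μ σ p / σ^2 := by positivity
            exact mul_le_mul_of_nonneg_left (mul_le_mul_of_nonneg_right h1 h2) h3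
        _ = c2 μ σ p / σ^2 * (x ^ (1-2*p) * (1/y)) := by rw [key]
    calc (Sfun μ σ p 1 - Sfun μ σ p y) * mDen μ σ p y
        ≤ Sfun μ σ p 1 * mDen μ σ p y := by
          apply mul_le_mul_of_nonneg_right _ (mDen_nonneg hσ.le hy0.le)
          linarith
      _ ≤ Sfun μ σ p 1 * (c2 μ σ p / σ^2 * (x ^ (1-2*p) * (1/y))) :=
          mul_le_mul_of_nonneg_left hmle hS1.le
      _ = Sfun μ σ p 1 * (c2 μ σ p / σ^2) * x ^ (1-2*p) * (1/y) := by ring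

open Filter Topology in
lemma tendsto_phiG (hσ : 0 < σ) (hp : 1/2 ≤ p) (hp1 : p < 1) :
    Tendsto (fun x => phiFun μ σ p x * Gfun μ σ p x) (𝓝[>] (0:ℝ)) (𝓝 0) := by
  have hq : (0:ℝ) < 2-2*p := by linarith
  have hS1 : 0 < Sfun μ σ p 1 := Sfun_pos hp1 one_pos
  have hc2 : (0:ℝ) < c2 μ σ p := c2_pos
  have hmem : Ioo (0:ℝ) 1 ∈ 𝓝[>] (0:ℝ) := Ioo_mem_nhdsGT one_pos
  refine squeeze_zero'
    (g := fun x => c2 μ σ p * (c2 μ σ p / σ^2) * (-(Real.log x * x ^ (2-2*p))))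
    (Filter.eventually_of_mem hmem ?_) (Filter.eventually_of_mem hmem ?_) ?_
  · intro x hx
    exact mul_nonneg (div_nonneg (Sfun_nonneg hp1 hx.1.le) hS1.le) (Gfun_nonneg hσ hp1 hx)
  · intro x hx
    have hkey : x * x ^ (1-2*p) = x ^ (2-2*p) := by
      rw [show (2-2*p : ℝ) = 1 + (1-2*p) by ring, Real.rpow_add hx.1, Real.rpow_one]
    have h1 : phiFun μ σ p x ≤ c2 μ σ p * x / Sfun μ σ p 1 := by
      rw [phiFun]
      exact (div_le_div_iff_of_pos_right hS1).mpr (Sfun_le hp1 ⟨hx.1.le, hx.2.le⟩)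
    calc phiFun μ σ p x * Gfun μ σ p x
        ≤ (c2 μ σ p * x / Sfun μ σ p 1) *
            (Sfun μ σ p 1 * (c2 μ σ p / σ^2) * x ^ (1-2*p) * (-Real.log x)) :=
          mul_le_mul h1 (Gfun_le hσ hp hp1 hx) (Gfun_nonneg hσ hp1 hx)
            (div_nonneg (mul_nonneg hc2.le hx.1.le) hS1.le)
      _ = c2 μ σ p * (c2 μ σ p / σ^2) * (-(Real.log x * (x * x ^ (1-2*p)))) := by
          field_simp
      _ = c2 μ σ p * (c2 μ σ p / σ^2) * (-(Real.log x * x ^ (2-2*p))) := by rw [hkey]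
  · have h0 := tendsto_log_mul_rpow_nhdsGT_zero hq
    have := (h0.neg).const_mul (c2 μ σ p * (c2 μ σ p / σ^2))
    simpa using this

end CEV

open CEV

open Filter Topology in
/-- `ψ` is twice differentiable on `(0,1)`, solves the degenerate ODE
`μ x ψ'(x) + (1/2) σ² x^{2p} ψ''(x) = −1` on `(0,1)`, and satisfies the boundary
conditions `ψ(1) = 0` and `lim_{x↓0} ψ(x) = 0`. -/
theorem stmt13 (μ σ p : ℝ) (hσ : 0 < σ) (hp : 1 / 2 ≤ p) (hp1 : p < 1) :
    (∀ x ∈ Ioo (0 : ℝ) 1,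
      DifferentiableAt ℝ (psiFun μ σ p) x ∧ DifferentiableAt ℝ (deriv (psiFun μ σ p)) x) ∧
    (∀ x ∈ Ioo (0 : ℝ) 1,
      μ * x * deriv (psiFun μ σ p) x
        + 1 / 2 * σ ^ 2 * x ^ (2 * p) * deriv (deriv (psiFun μ σ p)) x = -1) ∧
    psiFun μ σ p 1 = 0 ∧
    Tendsto (psiFun μ σ p) (𝓝[>] (0 : ℝ)) (𝓝 0) := by
  have hp' : (1:ℝ)/2 ≤ p := hp
  have key : ∀ x ∈ Ioo (0:ℝ) 1, deriv (psiFun μ σ p) x = Dfun μ σ p x :=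
    fun x hx => (hasDerivAt_psi hσ hp1 hx).deriv
  have hev : ∀ x ∈ Ioo (0:ℝ) 1, deriv (psiFun μ σ p) =ᶠ[𝓝 x] Dfun μ σ p :=
    fun x hx => Filter.eventuallyEq_of_mem (isOpen_Ioo.mem_nhds hx) key
  refine ⟨?_, ?_, psi_one hp1, ?_⟩
  · intro x hx
    refine ⟨(hasDerivAt_psi hσ hp1 hx).differentiableAt, ?_⟩
    exact (hev x hx).differentiableAt_iff.mpr (hasDerivAt_D hσ hp1 hx).differentiableAt
  · intro x hx
    have key2 : deriv (deriv (psiFun μ σ p)) x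
        = -(2*μ/σ^2) * x ^ (1-2*p) * Dfun μ σ p x - 2 * (sDen μ σ p x * mDen μ σ p x) := by
      rw [(hev x hx).deriv_eq]
      exact (hasDerivAt_D hσ hp1 hx).deriv
    rw [key x hx, key2, sDen_mul_mDen hσ hx.1]
    have hx2p : (0:ℝ) < x ^ (2*p) := Real.rpow_pos_of_pos hx.1 _
    have hab : x ^ (2*p) * x ^ (1-2*p) = x := by
      rw [← Real.rpow_add hx.1, show (2*p + (1-2*p) : ℝ) = 1 by ring, Real.rpow_one]
    have expand : 1/2*σ^2*x^(2*p) * (-(2*μ/σ^2) * x^(1-2*p) * Dfun μ σ p x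
        - 2 * (1/(σ^2 * x^(2*p)))) = -(μ * (x^(2*p) * x^(1-2*p)) * Dfun μ σ p x) - 1 := by
      field_simp
    rw [hab] at expand
    linarith [expand]
  · rw [psiFun_eq]
    have T1 := (tendsto_phiG (μ:=μ) hσ hp hp1).const_mul (2:ℝ)
    have T2 := ((tendsto_const_nhds (x := (1:ℝ)) (f := 𝓝[>] (0:ℝ))).sub
      (tendsto_phi (μ:=μ) (σ:=σ) hp1)).mul (tendsto_H (μ:=μ) hσ hp1)
    have T2' := T2.const_mul (2:ℝ)
    have := T1.add T2'
    simp only [mul_zero, add_zero, sub_zero, mul_one] at this T2'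
    convert this using 2 with x
    ring
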